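/- Let k > 0 and θ ∈ (0, π) with cos θ ≥ 0. Along the steepest descent contour ξ(t;θ) = k(1+it²)cos θ + kt√(t²-2i) sin θ (principal square root), one has Im(t√(t²-2i)) > -1 for all real t, and consequently Im ξ(t;θ) > -k sin θ for all real t. -/
import Mathlib

noncomputable def csqrt (z : ℂ) : ℂ := z ^ (1/2 : ℂ)

lemma csqrt_key (t : ℝ) : -1 < ((t : ℂ) * csqrt ((t : ℂ)^2 - 2 * Complex.I)).im := by
  set z : ℂ := (t : ℂ)^2 - 2 * Complex.I with hz
  have hzim : z.im = -2 := by simp [hz, ← Complex.ofReal_pow]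
  have hz0 : z ≠ 0 := by
    intro h; rw [h] at hzim; simp at hzim
  have harg_neg : Complex.arg z < 0 := Complex.arg_neg_iff.mpr (by rw [hzim]; norm_num)
  have harg_gt : -Real.pi < Complex.arg z := Complex.neg_pi_lt_arg z
  set w : ℂ := csqrt z with hw
  have hw2 : w ^ 2 = z := by
    have h := Complex.cpow_nat_inv_pow z (two_ne_zero)
    rw [hw, csqrt]; norm_num at h ⊢; exact h
  have hwim : w.im < 0 := by
    rw [hw, csqrt, Complex.cpow_def_of_ne_zero hz0]
    rw [Complex.exp_im]
    have him : (Complex.log z * (1/2 : ℂ)).im = Complex.arg z / 2 := by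
      simp [Complex.log_im, Complex.mul_im, Complex.log]
      ring
    rw [him]
    have hsin : Real.sin (Complex.arg z / 2) < 0 :=
      Real.sin_neg_of_neg_of_neg_pi_lt (by linarith) (by linarith)
    exact mul_neg_of_pos_of_neg (Real.exp_pos _) hsin
  have h1 : w.re * w.im = -1 := by
    have : (w ^ 2).im = -2 := by rw [hw2, hzim]
    rw [sq, Complex.mul_im] at this
    linarith
  have h2 : w.re ^ 2 - w.im ^ 2 = t ^ 2 := by
    have : (w ^ 2).re = t ^ 2 := by
      rw [hw2, hz]; simp [Complex.sub_re]
      norm_cast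
    rw [sq, Complex.mul_re] at this
    nlinarith [this]
  have him : ((t : ℂ) * w).im = t * w.im := by simp
  rw [him]
  rcases le_or_gt t 0 with ht | ht
  · nlinarith [mul_nonneg (neg_nonneg.mpr ht) (neg_nonneg.mpr hwim.le)]
  · have h3 : (t * w.im) ^ 2 = 1 - w.im ^ 4 := by
      linear_combination (-w.im ^ 2) * h2 + (w.re * w.im - 1) * h1
    have hsq : 0 < w.im ^ 2 := by nlinarith
    nlinarith [h3, sq_nonneg (w.im ^ 2), mul_pos ht (neg_pos.mpr hwim), mul_pos hsq hsq]

theorem stmt9 (k θ : ℝ) (hk : 0 < k) (hθ : θ ∈ Set.Ioo 0 Real.pi)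
    (hcos : 0 ≤ Real.cos θ) :
    (∀ t : ℝ, -1 < ((t : ℂ) * csqrt ((t : ℂ)^2 - 2 * Complex.I)).im) ∧
    (∀ t : ℝ, -(k * Real.sin θ) <
      ((k : ℂ) * (1 + Complex.I * (t : ℂ)^2) * (Real.cos θ : ℂ)
        + (k : ℂ) * (t : ℂ) * csqrt ((t : ℂ)^2 - 2 * Complex.I) * (Real.sin θ : ℂ)).im) := by
  refine ⟨csqrt_key, fun t => ?_⟩
  have h1 := csqrt_key t
  have hsin : 0 < Real.sin θ := Real.sin_pos_of_pos_of_lt_pi hθ.1 hθ.2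
  set w : ℂ := csqrt ((t : ℂ)^2 - 2 * Complex.I) with hw
  have him : ((k : ℂ) * (1 + Complex.I * (t : ℂ)^2) * (Real.cos θ : ℂ)
        + (k : ℂ) * (t : ℂ) * w * (Real.sin θ : ℂ)).im
      = k * t ^ 2 * Real.cos θ + k * Real.sin θ * (t * w.im) := by
    simp [Complex.add_im, Complex.mul_im, Complex.mul_re, ← Complex.ofReal_pow, Complex.cos_ofReal_re, Complex.sin_ofReal_re]
    ring
  rw [him]
  have h2 : ((t : ℂ) * w).im = t * w.im := by simp
  rw [h2] at h1
  nlinarith [mul_nonneg (mul_nonneg hk.le (sq_nonneg t)) hcos, mul_pos hk hsin]
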